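/- (Pointwise equivalence of the combined FDI with a positive-real-type FDI, step (fdic) ⟺ (fdit) in the proof of Lemma 3). Let nz, nw ∈ ℕ, let G ∈ ℂ^{nz×nw}, set E := [I_{nz}; 0_{nw×nz}] ∈ ℂ^{(nz+nw)×nz} and F := [G; I_{nw}] ∈ ℂ^{(nz+nw)×nw}, so that [E, F] = [[I_{nz}, G],[0, I_{nw}]] is invertible. Let P ∈ ℂ^{(nz+nw)×(nz+nw)} be invertible, let M̃ be a Hermitian complex (nz+nw)×(nz+nw) matrix, and define H := P [−E, F] [E, F]⁻¹ P⁻¹. Then the following are equivalent: (a) (P E)* M̃ (P E) is positive definite and (P F)* M̃ (P F) is negative definite; (b) H* M̃ + M̃ H is negative definite. Here * denotes conjugate transpose, and a Hermitian matrix S is positive (negative) definite if x* S x > 0 (< 0) for all nonzero complex vectors x. -/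

import Mathlib

open MeasureTheory Matrix
open scoped ComplexOrder

noncomputable section

namespace IQCPaper

/-- Membership in `L2e^p`: measurable and square integrable on every bounded interval. -/
def MemL2e (p : ℕ) (f : ℝ → Fin p → ℝ) : Prop :=
  Measurable f ∧ ∀ T : ℝ, 0 < T → IntegrableOn (fun t => ‖f t‖ ^ 2) (Set.Ioc 0 T) volume

/-- Membership in `L2^p`. -/
def MemL2 (p : ℕ) (f : ℝ → Fin p → ℝ) : Prop :=
  MemL2e p f ∧ IntegrableOn (fun t => ‖f t‖ ^ 2) (Set.Ioi 0) volume

/-- The `L2` norm on `[0,∞)`. -/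
def L2norm (p : ℕ) (f : ℝ → Fin p → ℝ) : ℝ :=
  Real.sqrt (∫ t in Set.Ioi (0 : ℝ), ‖f t‖ ^ 2)

/-- The filter trajectory: absolutely continuous solution of
`ξ' = A ξ + B u`, `ξ(0) = 0`, written in integral form. -/
def IsFilterTraj {k m : Type*} [Fintype k] [Fintype m]
    (A : Matrix k k ℝ) (B : Matrix k m ℝ)
    (u : ℝ → m → ℝ) (ξ : ℝ → k → ℝ) : Prop :=
  Continuous ξ ∧ ξ 0 = 0 ∧
    ∀ t : ℝ, 0 ≤ t → ξ t = ∫ s in (0 : ℝ)..t, (A.mulVec (ξ s) + B.mulVec (u s))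

/-- The KYP matrix. -/
def KYP {n m q : Type*} [Fintype n] [Fintype m] [Fintype q]
    (X : Matrix n n ℝ) (M : Matrix q q ℝ)
    (A : Matrix n n ℝ) (B : Matrix n m ℝ)
    (C : Matrix q n ℝ) (D : Matrix q m ℝ) : Matrix (n ⊕ m) (n ⊕ m) ℝ :=
  fromBlocks (Aᵀ * X + X * A + Cᵀ * M * C) (X * B + Cᵀ * M * D)
    (Bᵀ * X + Dᵀ * M * C) (Dᵀ * M * D)

/-- A real square matrix is Hurwitz if all its complex eigenvalues have negative real part. -/
def IsHurwitz {n : Type*} [Fintype n] [DecidableEq n] (A : Matrix n n ℝ) : Prop :=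
  ∀ μ ∈ spectrum ℂ (A.map Complex.ofReal), μ.re < 0

/-- Finite-horizon IQC with terminal cost matrix `Z`. -/
def FiniteHorizonIQC {k q : Type*} [Fintype k] [Fintype q] (nz nw : ℕ)
    (AΨ : Matrix k k ℝ) (BΨ : Matrix k (Fin nz ⊕ Fin nw) ℝ)
    (CΨ : Matrix q k ℝ) (DΨ : Matrix q (Fin nz ⊕ Fin nw) ℝ)
    (M : Matrix q q ℝ) (Z : Matrix k k ℝ)
    (Δ : (ℝ → Fin nz → ℝ) → (ℝ → Fin nw → ℝ)) : Prop :=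
  ∀ z : ℝ → Fin nz → ℝ, MemL2e nz z →
    ∀ ξ : ℝ → k → ℝ,
      IsFilterTraj AΨ BΨ (fun t => Sum.elim (z t) (Δ z t)) ξ →
      ∀ T : ℝ, 0 < T →
        0 ≤ (∫ t in (0 : ℝ)..T,
              (CΨ.mulVec (ξ t) + DΨ.mulVec (Sum.elim (z t) (Δ z t))) ⬝ᵥ
                M.mulVec (CΨ.mulVec (ξ t) + DΨ.mulVec (Sum.elim (z t) (Δ z t))))
            + (ξ T) ⬝ᵥ Z.mulVec (ξ T)

/-- Factorization identities for `(Z̃, M̃, C̃, D̃)`. -/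
def FactIds {k m q : Type*} [Fintype k] [Fintype m] [Fintype q]
    (AΨ : Matrix k k ℝ) (BΨ : Matrix k m ℝ) (CΨ : Matrix q k ℝ) (DΨ : Matrix q m ℝ)
    (M : Matrix q q ℝ) (Z' : Matrix k k ℝ) (M' : Matrix m m ℝ)
    (C' : Matrix m k ℝ) (D' : Matrix m m ℝ) : Prop :=
  Z'.IsSymm ∧ M'.IsSymm ∧
    AΨᵀ * Z' + Z' * AΨ + CΨᵀ * M * CΨ = C'ᵀ * M' * C' ∧
    Z' * BΨ + CΨᵀ * M * DΨ = C'ᵀ * M' * D' ∧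
    DΨᵀ * M * DΨ = D'ᵀ * M' * D'

/-- `(Z̃, M̃, C̃, D̃)` certifies a canonical factorization of `(AΨ, BΨ, CΨ, DΨ, M)`. -/
def CertifiesCanonical {k m q : Type*} [Fintype k] [Fintype m] [Fintype q]
    [DecidableEq k] [DecidableEq m]
    (AΨ : Matrix k k ℝ) (BΨ : Matrix k m ℝ) (CΨ : Matrix q k ℝ) (DΨ : Matrix q m ℝ)
    (M : Matrix q q ℝ) (Z' : Matrix k k ℝ) (M' : Matrix m m ℝ)
    (C' : Matrix m k ℝ) (D' : Matrix m m ℝ) : Prop :=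
  FactIds AΨ BΨ CΨ DΨ M Z' M' C' D' ∧ IsUnit D' ∧ IsHurwitz (AΨ - BΨ * D'⁻¹ * C')

/-- A causal operator. -/
def Causal (nz nw : ℕ) (Δ : (ℝ → Fin nz → ℝ) → (ℝ → Fin nw → ℝ)) : Prop :=
  ∀ z z' : ℝ → Fin nz → ℝ, ∀ T : ℝ, 0 < T →
    (∀ᵐ t ∂(volume.restrict (Set.Icc (0 : ℝ) T)), z t = z' t) →
    (∀ᵐ t ∂(volume.restrict (Set.Icc (0 : ℝ) T)), Δ z t = Δ z' t)

/-- A bounded operator from `L2^{nz}` to `L2^{nw}`. -/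
def BoundedOp (nz nw : ℕ) (Δ : (ℝ → Fin nz → ℝ) → (ℝ → Fin nw → ℝ)) : Prop :=
  ∃ c : ℝ, 0 ≤ c ∧ ∀ z, MemL2 nz z → MemL2 nw (Δ z) ∧ L2norm nw (Δ z) ≤ c * L2norm nz z


/-- `E = [I; 0]` over ℂ. -/
def Emat (nz nw : ℕ) : Matrix (Fin nz ⊕ Fin nw) (Fin nz) ℂ :=
  fromRows 1 0

/-- `F = [G; I]` over ℂ. -/
def Fmat {nz nw : ℕ} (G : Matrix (Fin nz) (Fin nw) ℂ) :
    Matrix (Fin nz ⊕ Fin nw) (Fin nw) ℂ :=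
  fromRows G 1

/-- `H = P [−E, F] [E, F]⁻¹ P⁻¹`. -/
def Hmat {nz nw : ℕ} (G : Matrix (Fin nz) (Fin nw) ℂ)
    (P : Matrix (Fin nz ⊕ Fin nw) (Fin nz ⊕ Fin nw) ℂ) :
    Matrix (Fin nz ⊕ Fin nw) (Fin nz ⊕ Fin nw) ℂ :=
  P * fromCols (-(Emat nz nw)) (Fmat G) * (fromCols (Emat nz nw) (Fmat G))⁻¹ * P⁻¹

section Aux

variable {n m : Type*} [Fintype n] [Fintype m] [DecidableEq n] [DecidableEq m]

lemma posDef_conj_of {M N : Matrix n n ℂ} (hM : M.PosDef) (hN : IsUnit N) :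
    (Nᴴ * M * N).PosDef := by
  refine posDef_iff_dotProduct_mulVec.mpr ⟨Matrix.isHermitian_conjTranspose_mul_mul N hM.1, fun x hx => ?_⟩
  have hinj := Matrix.mulVec_injective_iff_isUnit.mpr hN
  have hNx : N *ᵥ x ≠ 0 := fun h => hx (hinj (by simpa using h))
  simpa only [star_mulVec, dotProduct_mulVec, vecMul_vecMul] using hM.dotProduct_mulVec_pos hNx

lemma posDef_conj_iff {M N : Matrix n n ℂ} (hN : IsUnit N) :
    (Nᴴ * M * N).PosDef ↔ M.PosDef := by
  have h1 : N * N⁻¹ = 1 := Matrix.mul_nonsing_inv _ ((Matrix.isUnit_iff_isUnit_det N).mp hN)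
  constructor
  · intro h
    have hNi : IsUnit (N⁻¹) := Matrix.isUnit_nonsing_inv_iff.mpr hN
    have := posDef_conj_of h hNi
    have e : (N⁻¹)ᴴ * (Nᴴ * M * N) * N⁻¹ = (N * N⁻¹)ᴴ * M * (N * N⁻¹) := by
      simp only [Matrix.conjTranspose_mul]; noncomm_ring
    rwa [e, h1, Matrix.conjTranspose_one, Matrix.one_mul, Matrix.mul_one] at this
  · exact fun h => posDef_conj_of h hN

lemma star_dot_blocks (A : Matrix n n ℂ) (D : Matrix m m ℂ) (x : n → ℂ) (y : m → ℂ) :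
    star (Sum.elim x y) ⬝ᵥ (fromBlocks A 0 0 D) *ᵥ Sum.elim x y
      = star x ⬝ᵥ A *ᵥ x + star y ⬝ᵥ D *ᵥ y := by
  simp [Function.star_sumElim, fromBlocks_mulVec, sumElim_dotProduct_sumElim]

lemma posDef_fromBlocks_diag {A : Matrix n n ℂ} {D : Matrix m m ℂ} :
    (fromBlocks A 0 0 D).PosDef ↔ A.PosDef ∧ D.PosDef := by
  constructor
  · intro h
    have hherm := h.1
    rw [Matrix.IsHermitian, fromBlocks_conjTranspose, conjTranspose_zero] at hherm
    constructor
    · refine posDef_iff_dotProduct_mulVec.mpr ⟨by simpa [Matrix.IsHermitian] using congrArg Matrix.toBlocks₁₁ hherm, fun x hx => ?_⟩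
      have hx' : Sum.elim x (0 : m → ℂ) ≠ 0 := by
        intro hc; exact hx (funext fun i => congrFun hc (Sum.inl i))
      have := h.dotProduct_mulVec_pos hx'
      rw [star_dot_blocks] at this; simpa using this
    · refine posDef_iff_dotProduct_mulVec.mpr ⟨by simpa [Matrix.IsHermitian] using congrArg Matrix.toBlocks₂₂ hherm, fun y hy => ?_⟩
      have hy' : Sum.elim (0 : n → ℂ) y ≠ 0 := by
        intro hc; exact hy (funext fun i => congrFun hc (Sum.inr i))
      have := h.dotProduct_mulVec_pos hy'
      rw [star_dot_blocks] at this; simpa using this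
  · rintro ⟨hA, hD⟩
    refine posDef_iff_dotProduct_mulVec.mpr ⟨?_, fun x hx => ?_⟩
    · rw [Matrix.IsHermitian, fromBlocks_conjTranspose, hA.1, hD.1]; simp
    · have hx' : x = Sum.elim (x ∘ Sum.inl) (x ∘ Sum.inr) := (Sum.elim_comp_inl_inr x).symm
      rw [hx', star_dot_blocks]
      by_cases h1 : (x ∘ Sum.inl) = 0
      · have h2 : (x ∘ Sum.inr) ≠ 0 := by
          intro h2; apply hx; funext i; cases i with
          | inl i => exact congrFun h1 i
          | inr i => exact congrFun h2 i
        exact add_pos_of_nonneg_of_pos ((posSemidef_iff_dotProduct_mulVec.mp hA.posSemidef).2 _) (hD.dotProduct_mulVec_pos h2)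
      · exact add_pos_of_pos_of_nonneg (hA.dotProduct_mulVec_pos h1) ((posSemidef_iff_dotProduct_mulVec.mp hD.posSemidef).2 _)

lemma posDef_two_smul_iff {A : Matrix n n ℂ} : ((2:ℂ) • A).PosDef ↔ A.PosDef := by
  have h2 : (0:ℂ) < 2 := by norm_num
  constructor
  · intro h
    rw [posDef_iff_dotProduct_mulVec] at h ⊢
    constructor
    · have := h.1
      rw [Matrix.IsHermitian, conjTranspose_smul] at this
      have : (2:ℂ) • Aᴴ = (2:ℂ) • A := by simpa using this
      exact smul_right_injective _ (two_ne_zero) this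
    · intro x hx
      have := h.2 hx
      rw [smul_mulVec, dotProduct_smul, smul_eq_mul] at this
      have hz : star x ⬝ᵥ A *ᵥ x = 2⁻¹ * (2 * (star x ⬝ᵥ A *ᵥ x)) := by ring
      rw [hz]
      exact mul_pos (by rw [show ((2:ℂ)⁻¹) = ((2⁻¹:ℝ):ℂ) by norm_num]; exact_mod_cast (by norm_num : (0:ℝ) < 2⁻¹)) this
  · intro h
    refine posDef_iff_dotProduct_mulVec.mpr ⟨by rw [Matrix.IsHermitian, conjTranspose_smul, h.1]; simp, fun x hx => ?_⟩
    rw [smul_mulVec, dotProduct_smul, smul_eq_mul]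
    exact mul_pos h2 (h.dotProduct_mulVec_pos hx)

end Aux

/-- Pointwise equivalence of the combined FDI with a positive-real-type FDI
(step (fdic) ⟺ (fdit) in the proof of Lemma 3). -/
theorem fdi_combined_iff_positive_real
    {nz nw : ℕ}
    (G : Matrix (Fin nz) (Fin nw) ℂ)
    (P : Matrix (Fin nz ⊕ Fin nw) (Fin nz ⊕ Fin nw) ℂ) (hP : IsUnit P)
    (M' : Matrix (Fin nz ⊕ Fin nw) (Fin nz ⊕ Fin nw) ℂ) (hM' : M'.IsHermitian) :
    (((P * Emat nz nw)ᴴ * M' * (P * Emat nz nw)).PosDef ∧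
        (-((P * Fmat G)ᴴ * M' * (P * Fmat G))).PosDef) ↔
      (-((Hmat G P)ᴴ * M' + M' * Hmat G P)).PosDef := by
  have hTblocks : fromCols (Emat nz nw) (Fmat G) = fromBlocks 1 G 0 1 := by
    simp [Emat, Fmat]
  have hTmul : fromCols (Emat nz nw) (Fmat G) * fromBlocks 1 (-G) 0 1 = 1 := by
    rw [hTblocks]
    simp [Matrix.fromBlocks_multiply, ← Matrix.fromBlocks_one]
  have hTunit : IsUnit (fromCols (Emat nz nw) (Fmat G)) :=
    ⟨⟨_, _, hTmul, mul_eq_one_comm.mp hTmul⟩, rfl⟩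
  have hTinvT : (fromCols (Emat nz nw) (Fmat G))⁻¹ * fromCols (Emat nz nw) (Fmat G) = 1 :=
    Matrix.nonsing_inv_mul _ ((Matrix.isUnit_iff_isUnit_det _).mp hTunit)
  have hPinv : P⁻¹ * P = 1 :=
    Matrix.nonsing_inv_mul _ ((Matrix.isUnit_iff_isUnit_det _).mp hP)
  set N := P * fromCols (Emat nz nw) (Fmat G) with hN
  have hNunit : IsUnit N := hP.mul hTunit
  have hHN : Hmat G P * N = P * fromCols (-(Emat nz nw)) (Fmat G) := by
    rw [Hmat, hN, Matrix.mul_assoc _ P⁻¹, ← Matrix.mul_assoc P⁻¹ P, hPinv, Matrix.one_mul,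
      Matrix.mul_assoc _ _ (fromCols (Emat nz nw) (Fmat G)), hTinvT, Matrix.mul_one]
  have expand : Nᴴ * (-((Hmat G P)ᴴ * M' + M' * Hmat G P)) * N
      = -((Hmat G P * N)ᴴ * M' * N + Nᴴ * M' * (Hmat G P * N)) := by
    simp only [Matrix.conjTranspose_mul]
    noncomm_ring
  have key : Nᴴ * (-((Hmat G P)ᴴ * M' + M' * Hmat G P)) * N
      = fromBlocks ((2:ℂ) • ((P * Emat nz nw)ᴴ * M' * (P * Emat nz nw))) 0 0
          ((2:ℂ) • (-((P * Fmat G)ᴴ * M' * (P * Fmat G)))) := by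
    rw [expand, hHN, hN]
    simp only [Matrix.conjTranspose_mul, Matrix.conjTranspose_fromCols_eq_fromRows_conjTranspose,
      Matrix.conjTranspose_neg, Matrix.fromRows_mul, Matrix.mul_fromCols,
      Matrix.fromRows_fromCols_eq_fromBlocks, Matrix.fromBlocks_add, Matrix.fromBlocks_neg,
      Matrix.neg_mul, Matrix.mul_neg, Matrix.fromRows_neg]
    simp only [Matrix.fromCols_fromRows_eq_fromBlocks, Matrix.fromBlocks_add,
      Matrix.fromBlocks_neg, two_smul]
    congr 1 <;> abel
  conv_rhs => rw [← posDef_conj_iff hNunit, key, posDef_fromBlocks_diag,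
    posDef_two_smul_iff, posDef_two_smul_iff]

end IQCPaper
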